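/- Let R be a commutative ring, let n be an even positive integer, and let P be an R-module admitting an R-linear isomorphism P ⊕ R ≅ R^n. Then there exists an R-module Q and an R-linear isomorphism P ≅ Q ⊕ R. -/

import Mathlib

section Aux

variable {n : ℕ}

/-- pair-swap involution on `Fin n` for even `n`. -/
def pairSwap (hn : n % 2 = 0) (i : Fin n) : Fin n :=
  ⟨if i.1 % 2 = 0 then i.1 + 1 else i.1 - 1, by
    rcases i with ⟨i, hi⟩
    dsimp only
    split <;> omega⟩

lemma pairSwap_involutive (hn : n % 2 = 0) (i : Fin n) :
    pairSwap hn (pairSwap hn i) = i := by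
  rcases i with ⟨i, hi⟩
  apply Fin.ext
  simp only [pairSwap]
  split
  · split <;> omega
  · split <;> omega

lemma pairSwap_ne (hn : n % 2 = 0) (i : Fin n) : pairSwap hn i ≠ i := by
  rcases i with ⟨i, hi⟩
  apply Fin.ne_of_val_ne
  simp only [pairSwap]
  split <;> omega

lemma pairSwap_parity (hn : n % 2 = 0) (i : Fin n) :
    (pairSwap hn i).1 % 2 = 1 - i.1 % 2 := by
  rcases i with ⟨i, hi⟩
  simp only [pairSwap]
  split <;> omega

variable {R : Type*} [CommRing R]

/-- sign function -/
def sgn (R : Type*) [CommRing R] (i : Fin n) : R := if i.1 % 2 = 0 then 1 else -1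

lemma sgn_pairSwap (hn : n % 2 = 0) (i : Fin n) :
    sgn R (pairSwap hn i) = - sgn R i := by
  have := pairSwap_parity hn i
  unfold sgn
  rcases Nat.mod_two_eq_zero_or_one i.1 with h | h <;> simp [h] at this ⊢ <;> omega

lemma sgn_mul_self (i : Fin n) : sgn R i * sgn R i = 1 := by
  unfold sgn; split <;> ring

lemma sum_sgn_cancel (hn : n % 2 = 0) (c : Fin n → R) :
    ∑ i, sgn R i * c (pairSwap hn i) * c i = 0 := by
  apply Finset.sum_ninvolution (pairSwap hn)
  · intro i
    rw [pairSwap_involutive hn, sgn_pairSwap hn]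
    ring
  · intro i _; exact pairSwap_ne hn i
  · intro i; exact Finset.mem_univ _
  · exact pairSwap_involutive hn

/-- splitting lemma -/
lemma split_of_unimodular {P : Type*} [AddCommGroup P] [Module R P]
    (g : P →ₗ[R] R) (p : P) (hp : g p = 1) :
    Nonempty (P ≃ₗ[R] (LinearMap.ker g × R)) := by
  refine ⟨{ toFun := fun x => (⟨x - g x • p, ?_⟩, g x)
            map_add' := ?_
            map_smul' := ?_
            invFun := fun q => q.1.1 + q.2 • p
            left_inv := ?_
            right_inv := ?_ }⟩
  · simp [hp, mul_comm]
  · intro x y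
    ext
    · simp [add_smul]; abel
    · simp
  · intro r x
    ext
    · simp [smul_sub, smul_smul, mul_comm]
    · simp
  · intro x; simp
  · rintro ⟨⟨q, hq⟩, r⟩
    have hgq : g q = 0 := hq
    ext
    · simp [hgq, hp]
    · simp [hgq, hp]

end Aux

/-- Let `R` be a commutative ring, let `n` be an even positive integer, and let
`P` be an `R`-module admitting an `R`-linear isomorphism `P ⊕ R ≅ R^n`. Then there exists an
`R`-module `Q` and an `R`-linear isomorphism `P ≅ Q ⊕ R`. -/
theorem stablyFree_even_free_summand_rank_one
    (R : Type u) [CommRing R] (n : ℕ) (hn : 0 < n) (heven : Even n)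
    (P : Type v) [AddCommGroup P] [Module R P]
    (h : Nonempty ((P × R) ≃ₗ[R] (Fin n → R))) :
    ∃ (Q : Type v) (_ : AddCommGroup Q) (_ : Module R Q),
      Nonempty (P ≃ₗ[R] (Q × R)) := by
  obtain ⟨e⟩ := h
  have hn2 : n % 2 = 0 := Nat.even_iff.mp heven
  set σ := pairSwap (n := n) hn2 with hσ
  -- projection functional π on R^n
  set π : (Fin n → R) →ₗ[R] R :=
    (LinearMap.snd R P R).comp (e.symm : (Fin n → R) →ₗ[R] P × R) with hπ
  set u : Fin n → R := fun i => π (fun j => if i = j then 1 else 0) with hu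
  set a : Fin n → R := e (0, 1) with ha
  set b : Fin n → R := fun i => sgn R i * u (σ i) with hb
  have hπx : ∀ x : Fin n → R, π x = ∑ i, x i * u i := by
    intro x
    rw [LinearMap.pi_apply_eq_sum_univ π x]
    simp [smul_eq_mul]
    rfl
  -- π b = 0
  have hπb : π b = 0 := by
    rw [hπx]
    have : ∀ i, b i * u i = sgn R i * u (σ i) * u i := fun i => rfl
    simp_rw [this]
    exact sum_sgn_cancel hn2 u
  -- π a = 1
  have hπa : π a = 1 := by
    rw [ha, hπ]
    simp
  set p : P := (e.symm b).1 with hp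
  have heb : e.symm b = (p, 0) := by
    have : (e.symm b).2 = 0 := hπb
    rw [hp]
    exact Prod.ext rfl this
  have hepb : e (p, 0) = b := by
    rw [← heb]; simp
  -- functional v on R^n
  set v : (Fin n → R) →ₗ[R] R :=
    { toFun := fun x => ∑ i, sgn R i * a (σ i) * x i
      map_add' := by
        intro x y
        simp [mul_add, Finset.sum_add_distrib]
      map_smul' := by
        intro r x
        simp [Finset.mul_sum, smul_eq_mul]
        apply Finset.sum_congr rfl
        intro i _
        ring } with hv
  set g : P →ₗ[R] R := v.comp ((e : P × R →ₗ[R] Fin n → R).comp (LinearMap.inl R P R)) with hg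
  have hgp : g p = 1 := by
    have h1 : g p = v b := by
      rw [hg]
      simp [hepb]
    rw [h1, hv]
    simp only [LinearMap.coe_mk, AddHom.coe_mk]
    have h2 : ∀ i, sgn R i * a (σ i) * b i = a (σ i) * u (σ i) := by
      intro i
      have : sgn R i * a (σ i) * (sgn R i * u (σ i))
          = (sgn R i * sgn R i) * (a (σ i) * u (σ i)) := by ring
      rw [hb]
      dsimp only
      rw [this, sgn_mul_self, one_mul]
    simp_rw [h2]
    have hperm : ∑ i, a (σ i) * u (σ i) = ∑ j, a j * u j :=
      Equiv.sum_comp (Function.Involutive.toPerm σ (pairSwap_involutive hn2))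
        (fun j => a j * u j)
    rw [hperm, ← hπx, hπa]
  exact ⟨LinearMap.ker g, inferInstance, inferInstance,
    (split_of_unimodular g p hgp).map (LinearEquiv.trans · (LinearEquiv.refl R _))⟩
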